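/- In base b dismal arithmetic, a number n (different from β = b−1) is a dismal prime if and only if the dismal sum of its distinct dismal prime divisors equals n. -/

import Mathlib

/-- The `i`-th base-`b` digit of `n`. -/
def digit (b n i : ℕ) : ℕ := n / b ^ i % b

/-- Dismal addition in base `b`: digitwise maximum of base-`b` digits. -/
def dadd (b m n : ℕ) : ℕ :=
  ∑ i ∈ Finset.range (m + n + 1), max (digit b m i) (digit b n i) * b ^ i

/-- Dismal multiplication in base `b`: digit convolution with `min` as digit
product and `max` as digit sum (no carries). -/
def dmul (b m n : ℕ) : ℕ :=
  ∑ k ∈ Finset.range (m + n + 1),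
    ((Finset.range (k + 1)).sup fun i => min (digit b m i) (digit b n (k - i))) * b ^ k

/-- The number of base-`b` digits of `n`. -/
def dlen (b n : ℕ) : ℕ := (Nat.digits b n).length

/-- A base-`b` dismal prime: a number other than `b - 1` whose only dismal
factorizations are `(b - 1) ⊠ p`. -/
def DPrime (b p : ℕ) : Prop :=
  p ≠ b - 1 ∧ ∀ m n : ℕ, dmul b m n = p →
    (m = b - 1 ∧ n = p) ∨ (m = p ∧ n = b - 1)

/-- `p` dismally divides `n` in base `b`. -/
def DDvd (b p n : ℕ) : Prop := ∃ q, dmul b p q = n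

open scoped Classical in
/-- The finite set of dismal divisors of `n` (every dismal divisor of a
nonzero `n` has at most `dlen b n` digits). -/
noncomputable def ddivisors (b n : ℕ) : Finset ℕ :=
  (Finset.range (b ^ dlen b n)).filter fun p => DDvd b p n

/-- The dismal sum of a finite set of numbers: digitwise supremum. -/
def ddigitSum (b : ℕ) (S : Finset ℕ) : ℕ :=
  ∑ i ∈ Finset.range (S.sup id + 1), (S.sup fun p => digit b p i) * b ^ i

open scoped Classical in
/-- The finite set of dismal prime divisors of `n`. -/
noncomputable def primeDivisors (b n : ℕ) : Finset ℕ :=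
  (Finset.range (b ^ dlen b n)).filter fun p => DPrime b p ∧ DDvd b p n

section Lemmas

variable {b : ℕ}

lemma digit_lt (hb : 2 ≤ b) (n i : ℕ) : digit b n i < b :=
  Nat.mod_lt _ (by omega)

lemma digit_zero_of_lt {n i : ℕ} (h : n < b ^ i) : digit b n i = 0 := by
  unfold digit
  rw [Nat.div_eq_of_lt h, Nat.zero_mod]

lemma digit_zero_of_le (hb : 2 ≤ b) {n i : ℕ} (h : n ≤ i) : digit b n i = 0 := by
  refine digit_zero_of_lt ?_
  calc n < 2 ^ n := (Nat.lt_two_pow_self (n := n))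
    _ ≤ 2 ^ i := Nat.pow_le_pow_right (by omega) h
    _ ≤ b ^ i := Nat.pow_le_pow_left (by omega) i

lemma digit_single (hb : 2 ≤ b) {d : ℕ} (hd : d < b) : digit b d 0 = d := by
  simp [digit, Nat.mod_eq_of_lt hd]

lemma sum_digits_lt (hb : 2 ≤ b) (f : ℕ → ℕ) (hf : ∀ i, f i < b) (N : ℕ) :
    ∑ i ∈ Finset.range N, f i * b ^ i < b ^ N := by
  induction N with
  | zero => simp
  | succ N ih =>
    rw [Finset.sum_range_succ, pow_succ]
    have h1 : f N ≤ b - 1 := by have := hf N; omega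
    have h2 : f N * b ^ N ≤ (b - 1) * b ^ N := Nat.mul_le_mul_right _ h1
    have h3 : b ^ N + (b - 1) * b ^ N = b ^ N * b := by
      obtain ⟨c, rfl⟩ := Nat.exists_eq_add_of_le (show 1 ≤ b by omega)
      simp [Nat.add_sub_cancel_left]
      ring
    omega

/-- Key digit-extraction lemma. -/
lemma digit_sum_eq (hb : 2 ≤ b) (f : ℕ → ℕ) (hf : ∀ i, f i < b) (N k : ℕ) :
    digit b (∑ i ∈ Finset.range N, f i * b ^ i) k = if k < N then f k else 0 := by
  induction N with
  | zero => simp [digit]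
  | succ N ih =>
    rw [Finset.sum_range_succ]
    rcases lt_trichotomy k N with h | h | h
    · obtain ⟨M, rfl⟩ : ∃ M, N = M + 1 + k := ⟨N - k - 1, by omega⟩
      have hdecomp : f (M + 1 + k) * b ^ (M + 1 + k) =
          f (M + 1 + k) * b ^ M * b * b ^ k := by
        rw [pow_add, pow_add, pow_one]
        ring
      unfold digit
      rw [hdecomp, Nat.add_mul_div_right _ _ (Nat.pow_pos (a := b) (n := k) (by omega)),
        Nat.add_mul_mod_self_right]
      have := ih
      unfold digit at this
      rw [this]
      simp [h, Nat.lt_succ_of_lt h]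
    · subst h
      unfold digit
      have hlt : ∑ i ∈ Finset.range k, f i * b ^ i < b ^ k := sum_digits_lt hb f hf k
      rw [Nat.add_mul_div_right _ _ (Nat.pow_pos (a := b) (n := k) (by omega)),
        Nat.div_eq_of_lt hlt]
      simp [Nat.mod_eq_of_lt (hf k)]
    · have hlt : ∑ i ∈ Finset.range N, f i * b ^ i + f N * b ^ N < b ^ k := by
        calc ∑ i ∈ Finset.range N, f i * b ^ i + f N * b ^ N
            = ∑ i ∈ Finset.range (N + 1), f i * b ^ i := (Finset.sum_range_succ _ _).symm
          _ < b ^ (N + 1) := sum_digits_lt hb f hf (N + 1)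
          _ ≤ b ^ k := Nat.pow_le_pow_right (by omega) h
      rw [digit_zero_of_lt hlt]
      simp [show ¬ k < N + 1 by omega]

lemma sum_digit_mod (n N : ℕ) :
    ∑ i ∈ Finset.range N, digit b n i * b ^ i = n % b ^ N := by
  induction N with
  | zero => simp [Nat.mod_one]
  | succ N ih =>
    rw [Finset.sum_range_succ, ih, pow_succ, Nat.mod_mul]
    unfold digit
    ring

lemma sum_digit_self (hb : 2 ≤ b) {n N : ℕ} (h : n < b ^ N) :
    ∑ i ∈ Finset.range N, digit b n i * b ^ i = n := by
  rw [sum_digit_mod, Nat.mod_eq_of_lt h]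

lemma lt_pow_self' (hb : 2 ≤ b) (n m : ℕ) (h : n ≤ m) : n < b ^ m :=
  calc n < 2 ^ n := (Nat.lt_two_pow_self (n := n))
    _ ≤ 2 ^ m := Nat.pow_le_pow_right (by omega) h
    _ ≤ b ^ m := Nat.pow_le_pow_left (by omega) m

lemma digit_ext (hb : 2 ≤ b) {x y : ℕ} (h : ∀ k, digit b x k = digit b y k) : x = y := by
  have hx : x < b ^ (x + y) := lt_pow_self' hb x (x + y) (by omega)
  have hy : y < b ^ (x + y) := lt_pow_self' hb y (x + y) (by omega)
  calc x = ∑ i ∈ Finset.range (x + y), digit b x i * b ^ i := (sum_digit_self hb hx).symm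
    _ = ∑ i ∈ Finset.range (x + y), digit b y i * b ^ i := by
        refine Finset.sum_congr rfl fun i _ => by rw [h i]
    _ = y := sum_digit_self hb hy

lemma digit_dmul (hb : 2 ≤ b) (m q k : ℕ) :
    digit b (dmul b m q) k =
      (Finset.range (k + 1)).sup fun i => min (digit b m i) (digit b q (k - i)) := by
  unfold dmul
  rw [digit_sum_eq hb _ (fun j => ?_) (m + q + 1) k]
  · split
    · rfl
    · symm
      rename_i hk
      refine Nat.le_zero.mp (Finset.sup_le fun i hi => ?_)
      rcases le_or_gt m i with h | h
      · rw [digit_zero_of_le hb h]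
        simp
      · rw [digit_zero_of_le hb (show q ≤ k - i by omega)]
        simp
  · refine (Finset.sup_lt_iff (show (⊥ : ℕ) < b by exact (by omega : (0:ℕ) < b))).mpr fun i _ => ?_
    exact lt_of_le_of_lt (min_le_left _ _) (digit_lt hb m i)

lemma digit_dmul_single_right (hb : 2 ≤ b) {p r : ℕ} (hr : r < b) (k : ℕ) :
    digit b (dmul b p r) k = min (digit b p k) r := by
  rw [digit_dmul hb]
  apply le_antisymm
  · refine Finset.sup_le fun i hi => ?_
    rcases eq_or_lt_of_le (Nat.lt_succ_iff.mp (Finset.mem_range.mp hi)) with h | h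
    · subst h; simp [digit_single hb hr]
    · rw [digit_zero_of_lt (show r < b ^ (k - i) by
        calc r < b := hr
          _ ≤ b ^ (k - i) := Nat.le_self_pow (by omega) b)]
      simp
  · have hk : k ∈ Finset.range (k + 1) := Finset.mem_range.mpr (by omega)
    have := Finset.le_sup (f := fun i => min (digit b p i) (digit b r (k - i))) hk
    simpa [digit_single hb hr] using this

lemma digit_dmul_single_left (hb : 2 ≤ b) {d p : ℕ} (hd : d < b) (k : ℕ) :
    digit b (dmul b d p) k = min d (digit b p k) := by
  rw [digit_dmul hb]
  apply le_antisymm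
  · refine Finset.sup_le fun i hi => ?_
    rcases Nat.eq_zero_or_pos i with h | h
    · subst h; simp [digit_single hb hd]
    · rw [digit_zero_of_lt (show d < b ^ i by
        calc d < b := hd
          _ ≤ b ^ i := Nat.le_self_pow (by omega) b)]
      simp
  · have hk : (0 : ℕ) ∈ Finset.range (k + 1) := Finset.mem_range.mpr (by omega)
    have := Finset.le_sup (f := fun i => min (digit b d i) (digit b p (k - i))) hk
    simpa [digit_single hb hd] using this

lemma dmul_beta_right (hb : 2 ≤ b) (p : ℕ) : dmul b p (b - 1) = p := by
  refine digit_ext hb fun k => ?_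
  rw [digit_dmul_single_right hb (show b - 1 < b by omega)]
  have := digit_lt hb p k
  omega

lemma dmul_beta_left (hb : 2 ≤ b) (p : ℕ) : dmul b (b - 1) p = p := by
  refine digit_ext hb fun k => ?_
  rw [digit_dmul_single_left hb (show b - 1 < b by omega)]
  have := digit_lt hb p k
  omega

lemma prime_beta (hb : 2 ≤ b) {p : ℕ} (hp : DPrime b p) :
    ∃ i, digit b p i = b - 1 := by
  set D := (Finset.range (p + 1)).sup (digit b p) with hD
  have hDlt : D < b := by
    refine (Finset.sup_lt_iff (show (⊥ : ℕ) < b by exact (by omega : (0:ℕ) < b))).mpr fun i _ => digit_lt hb p i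
  have hDk : ∀ k, digit b p k ≤ D := by
    intro k
    rcases le_or_gt k p with h | h
    · exact Finset.le_sup (Finset.mem_range.mpr (by omega))
    · rw [digit_zero_of_le hb (by omega)]; exact Nat.zero_le _
  have hmul : dmul b D p = p := by
    refine digit_ext hb fun k => ?_
    rw [digit_dmul_single_left hb hDlt]
    exact min_eq_right (hDk k)
  rcases hp.2 D p hmul with ⟨h1, _⟩ | ⟨_, h2⟩
  · obtain ⟨i, _, hi⟩ := Finset.exists_mem_eq_sup (Finset.range (p + 1))
      (Finset.nonempty_range_iff.mpr (by omega)) (digit b p)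
    exact ⟨i, by rw [← hi, ← hD, h1]⟩
  · exact absurd h2 hp.1

lemma lt_pow_dlen (hb : 2 ≤ b) (n : ℕ) : n < b ^ dlen b n :=
  Nat.lt_base_pow_length_digits (by omega)

lemma dlen_pos (hb : 2 ≤ b) {n : ℕ} (hn : n ≠ 0) : 1 ≤ dlen b n := by
  have h : Nat.digits b n ≠ [] := Nat.digits_ne_nil_iff_ne_zero.mpr hn
  unfold dlen
  exact List.length_pos_iff.mpr h

lemma pow_dlen_pred_le (hb : 2 ≤ b) {n : ℕ} (hn : n ≠ 0) :
    b ^ (dlen b n - 1) ≤ n := by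
  have h := Nat.base_pow_length_digits_le b n (by omega) hn
  have hL := dlen_pos hb hn
  have : b ^ dlen b n = b * b ^ (dlen b n - 1) := by
    rw [← pow_succ']
    congr 1
    omega
  unfold dlen at *
  rw [this] at h
  exact Nat.le_of_mul_le_mul_left h (by omega)

lemma top_digit_ne_zero (hb : 2 ≤ b) {n : ℕ} (hn : n ≠ 0) :
    digit b n (dlen b n - 1) ≠ 0 := by
  have h1 : b ^ (dlen b n - 1) ≤ n := pow_dlen_pred_le hb hn
  have h2 : n < b ^ dlen b n := lt_pow_dlen hb n
  have hL := dlen_pos hb hn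
  have hpow : b ^ dlen b n = b ^ (dlen b n - 1) * b := by
    rw [← pow_succ]; congr 1; omega
  have hdiv1 : 1 ≤ n / b ^ (dlen b n - 1) :=
    (Nat.one_le_div_iff (Nat.pow_pos (a := b) (by omega))).mpr h1
  have hdiv2 : n / b ^ (dlen b n - 1) < b := by
    rw [Nat.div_lt_iff_lt_mul (Nat.pow_pos (a := b) (by omega))]
    calc n < b ^ dlen b n := h2
      _ = b * b ^ (dlen b n - 1) := by rw [hpow]; ring
  unfold digit
  rw [Nat.mod_eq_of_lt hdiv2]
  omega

lemma digit_ddigitSum (hb : 2 ≤ b) (S : Finset ℕ) (k : ℕ) :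
    digit b (ddigitSum b S) k = S.sup fun p => digit b p k := by
  unfold ddigitSum
  rw [digit_sum_eq hb _ (fun i => ?_) _ k]
  · split
    · rfl
    · symm
      rename_i hk
      refine Nat.le_zero.mp (Finset.sup_le fun p hp => ?_)
      have hple : p ≤ S.sup id := Finset.le_sup (f := id) hp
      rw [digit_zero_of_le hb (by omega)]
  · refine (Finset.sup_lt_iff (show (⊥ : ℕ) < b by exact (by omega : (0:ℕ) < b))).mpr fun p _ => digit_lt hb p i

end Lemmas

/-- a number `n ≠ b - 1` is a dismal prime iff the dismal sum of
its distinct dismal prime divisors equals `n`. -/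
theorem dismal_prime_iff_sum_prime_divisors (b : ℕ) (hb : 2 ≤ b) (n : ℕ)
    (hn : 0 < n) (hne : n ≠ b - 1) :
    DPrime b n ↔ ddigitSum b (primeDivisors b n) = n := by
  classical
  constructor
  · intro hp
    have hPD : primeDivisors b n = {n} := by
      ext p
      simp only [primeDivisors, Finset.mem_filter, Finset.mem_range, Finset.mem_singleton]
      constructor
      · rintro ⟨-, hpp, q, hq⟩
        rcases hp.2 p q hq with ⟨h1, -⟩ | ⟨h1, -⟩
        · exact absurd h1 hpp.1
        · exact h1
      · rintro rfl
        exact ⟨lt_pow_dlen hb p, hp, ⟨b - 1, dmul_beta_right hb p⟩⟩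
    rw [hPD]
    unfold ddigitSum
    simp only [Finset.sup_singleton, id]
    exact sum_digit_self hb (lt_pow_self' hb n (n + 1) (by omega))
  · intro hsum
    have hdig : ∀ k, (primeDivisors b n).sup (fun p => digit b p k) = digit b n k := by
      intro k
      conv_rhs => rw [← hsum]
      rw [digit_ddigitSum hb]
    -- primeDivisors is nonempty
    have hnonempty : (primeDivisors b n).Nonempty := by
      rw [Finset.nonempty_iff_ne_empty]
      intro hempty
      apply hn.ne'
      refine (digit_ext hb fun k => ?_).symm
      rw [← hdig k, hempty]
      simp [digit]
    -- n has a digit equal to b - 1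
    obtain ⟨p0, hp0⟩ := hnonempty
    have hp0' := Finset.mem_filter.mp hp0
    obtain ⟨i0, hi0⟩ := prime_beta hb hp0'.2.1
    have hk0 : digit b n i0 = b - 1 := by
      have h1 : digit b p0 i0 ≤ digit b n i0 := by
        rw [← hdig i0]
        exact Finset.le_sup (f := fun p => digit b p i0) hp0
      have h2 := digit_lt hb n i0
      omega
    -- the top digit of n is realized by some prime divisor p
    set L := dlen b n with hL
    have hLpos : 1 ≤ L := dlen_pos hb hn.ne'
    have htop : digit b n (L - 1) ≠ 0 := top_digit_ne_zero hb hn.ne'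
    obtain ⟨p, hpPD, hpeq⟩ := Finset.exists_mem_eq_sup (primeDivisors b n) ⟨p0, hp0⟩
      (fun p => digit b p (L - 1))
    have hptop : digit b p (L - 1) = digit b n (L - 1) := by rw [← hpeq, hdig]
    have hp' := Finset.mem_filter.mp hpPD
    obtain ⟨r, hr⟩ := hp'.2.2
    -- all digits of r beyond position 0 vanish
    have hr1 : ∀ j, 1 ≤ j → digit b r j = 0 := by
      intro j hj
      by_contra hne'
      have hterm : min (digit b p (L - 1)) (digit b r j) ≤ digit b n (L - 1 + j) := by
        rw [← hr, digit_dmul hb]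
        have hmem : L - 1 ∈ Finset.range (L - 1 + j + 1) := Finset.mem_range.mpr (by omega)
        have := Finset.le_sup
          (f := fun i => min (digit b p i) (digit b r (L - 1 + j - i))) hmem
        simpa [show L - 1 + j - (L - 1) = j by omega] using this
      have hzero : digit b n (L - 1 + j) = 0 := by
        refine digit_zero_of_lt ?_
        calc n < b ^ L := lt_pow_dlen hb n
          _ ≤ b ^ (L - 1 + j) := Nat.pow_le_pow_right (by omega) (by omega)
      rw [hzero] at hterm
      have h1 : digit b p (L - 1) ≠ 0 := by rw [hptop]; exact htop
      omega
    -- hence r < b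
    have hrb : r < b := by
      by_contra hge
      push_neg at hge
      have hr0 : r ≠ 0 := by omega
      have hLr : 2 ≤ dlen b r := by
        by_contra hlt
        push_neg at hlt
        have : r < b ^ dlen b r := lt_pow_dlen hb r
        have : r < b ^ 1 := lt_of_lt_of_le this (Nat.pow_le_pow_right (by omega) (by omega))
        simp at this
        omega
      exact top_digit_ne_zero hb hr0 (hr1 (dlen b r - 1) (by omega))
    -- r must be b - 1
    have hrβ : r = b - 1 := by
      have h := hk0
      rw [← hr, digit_dmul_single_right hb hrb] at h
      have := min_le_right (digit b p i0) r
      omega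
    -- so n = p, which is prime
    have hnp : p = n := by
      refine digit_ext hb fun k => ?_
      rw [← hr, digit_dmul_single_right hb hrb, hrβ]
      have := digit_lt hb p k
      omega
    rw [← hnp]
    exact hp'.2.1
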